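/- arXiv:2001.06425 — 2 statements merged into one kernel-verified Lean document; each statement's English description precedes it below -/
import Mathlib

section
/- Let W_mixt(X) := μ‖sym X‖² + μ_c‖skew X‖² + (λμ/(λ+2μ))(tr X)² and define W_Coss(X) := W_mixt(X) − ((μ−μ_c)²/(2(μ+μ_c)))‖Xᵀn₀‖² for 3×3 matrices X with X·n₀ = 0 (n₀ = e₃). Writing X = aX + n₀⊗v with aX the planar 2×2 block and v := Xᵀn₀ ∈ ℝ², one has W_Coss(X) = μ‖sym(aX)‖² + μ_c‖skew(aX)‖² + (λμ/(λ+2μ))(tr(aX))² + (2μμ_c/(μ+μ_c))‖v‖². -/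
set_option maxHeartbeats 2000000


open Matrix

noncomputable def symM {n : ℕ} (X : Matrix (Fin n) (Fin n) ℝ) : Matrix (Fin n) (Fin n) ℝ :=
  ((1:ℝ)/2) • (X + X.transpose)

noncomputable def skewM {n : ℕ} (X : Matrix (Fin n) (Fin n) ℝ) : Matrix (Fin n) (Fin n) ℝ :=
  ((1:ℝ)/2) • (X - X.transpose)

noncomputable def fnorm2 {n : ℕ} (X : Matrix (Fin n) (Fin n) ℝ) : ℝ :=
  (X.transpose * X).trace

noncomputable def n0 : Fin 3 → ℝ := fun i => if i = 2 then 1 else 0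

/-- upper-left 2×2 block -/
noncomputable def planar (X : Matrix (Fin 3) (Fin 3) ℝ) : Matrix (Fin 2) (Fin 2) ℝ :=
  X.submatrix (Fin.castLE (by omega)) (Fin.castLE (by omega))

/-- transversal part `v = (X₃₁, X₃₂)` -/
noncomputable def transv (X : Matrix (Fin 3) (Fin 3) ℝ) : Fin 2 → ℝ :=
  fun α => X 2 (Fin.castLE (by omega) α)

/-- For `X` with vanishing third column,
`W_Coss(X) = W_mixt(X) − ((μ−μ_c)²/(2(μ+μ_c)))‖Xᵀn₀‖²` equals
`μ‖sym(aX)‖² + μ_c‖skew(aX)‖² + (λμ/(λ+2μ))(tr(aX))² + (2μμ_c/(μ+μ_c))‖v‖²`. -/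
theorem WCoss_planar_transversal_split (μ μc lam : ℝ)
    (h1 : lam + 2 * μ ≠ 0) (h2 : μ + μc ≠ 0)
    (X : Matrix (Fin 3) (Fin 3) ℝ) (hX : X *ᵥ n0 = 0) :
    (μ * fnorm2 (symM X) + μc * fnorm2 (skewM X)
        + (lam * μ / (lam + 2 * μ)) * X.trace ^ 2)
      - ((μ - μc) ^ 2 / (2 * (μ + μc))) * ((X.transpose *ᵥ n0) ⬝ᵥ (X.transpose *ᵥ n0)) =
    μ * fnorm2 (symM (planar X)) + μc * fnorm2 (skewM (planar X))
      + (lam * μ / (lam + 2 * μ)) * (planar X).trace ^ 2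
      + (2 * μ * μc / (μ + μc)) * (transv X ⬝ᵥ transv X) := by

  have h0 := congrFun hX 0
  have hh1 := congrFun hX 1
  have hh2 := congrFun hX 2
  simp [mulVec, dotProduct, n0, Fin.sum_univ_three] at h0 hh1 hh2
  simp only [fnorm2, symM, skewM, planar, transv, Matrix.trace, Matrix.diag,
    Matrix.mul_apply, Matrix.smul_apply, Matrix.add_apply, Matrix.sub_apply,
    Matrix.transpose_apply, Matrix.submatrix_apply, mulVec, dotProduct, n0,
    Fin.sum_univ_three, Fin.sum_univ_two, Finset.sum_ite_eq]
  have c0 : ∀ h : (2:ℕ) ≤ 3, Fin.castLE h (0:Fin 2) = 0 := fun _ => rfl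
  have c1 : ∀ h : (2:ℕ) ≤ 3, Fin.castLE h (1:Fin 2) = 1 := fun _ => rfl
  simp only [c0, c1]
  norm_num [Fin.ext_iff, h0, hh1, hh2]
  field_simp
  ring
end

section
/- If μ > 0, μ_c > 0 and 3λ + 2μ > 0, then the quadratic form W_Coss(X) := μ‖dev_s sym(aX)‖² + μ_c‖skew(aX)‖² + (μ(3λ+2μ)/(2(λ+2μ)))(tr X)² + (2μμ_c/(μ+μ_c))‖v‖² is positive definite on the space of 3×3 real matrices X with vanishing third column, where aX is the planar 2×2 block, v = (X_{31},X_{32}), and dev_s Y := Y − (tr Y/2)·I₂. (Note λ+2μ > 0 follows from the hypotheses.) -/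
open Matrix

noncomputable def devS (Y : Matrix (Fin 2) (Fin 2) ℝ) : Matrix (Fin 2) (Fin 2) ℝ :=
  Y - (Y.trace / 2) • (1 : Matrix (Fin 2) (Fin 2) ℝ)

noncomputable def WCoss (μ μc lam : ℝ) (X : Matrix (Fin 3) (Fin 3) ℝ) : ℝ :=
  μ * fnorm2 (devS (symM (planar X))) + μc * fnorm2 (skewM (planar X))
    + (μ * (3 * lam + 2 * μ) / (2 * (lam + 2 * μ))) * X.trace ^ 2
    + (2 * μ * μc / (μ + μc)) * (transv X ⬝ᵥ transv X)

set_option maxHeartbeats 2000000 in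
/-- If `μ > 0`, `μ_c > 0`, `3λ+2μ > 0` then `W_Coss` is positive definite on
matrices with vanishing third column. -/
theorem WCoss_positive_definite (μ μc lam : ℝ)
    (hμ : 0 < μ) (hμc : 0 < μc) (hlam : 0 < 3 * lam + 2 * μ) :
    ∀ X : Matrix (Fin 3) (Fin 3) ℝ, X *ᵥ n0 = 0 →
      0 ≤ WCoss μ μc lam X ∧ (WCoss μ μc lam X = 0 ↔ X = 0) := by
  intro X hX
  have hc : ∀ i, X i 2 = 0 := by
    intro i
    have := congrFun hX i
    simpa [Matrix.mulVec, dotProduct, n0, Fin.sum_univ_succ] using this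
  have hlm : 0 < lam + 2 * μ := by linarith
  set K := μ * (3 * lam + 2 * μ) / (2 * (lam + 2 * μ)) with hK
  set M := 2 * μ * μc / (μ + μc) with hM
  have hKpos : 0 < K := by rw [hK]; positivity
  have hMpos : 0 < M := by rw [hM]; positivity
  have hW : WCoss μ μc lam X =
      μ * ((X 0 0 - X 1 1)^2/2 + (X 0 1 + X 1 0)^2/2)
      + μc * ((X 0 1 - X 1 0)^2/2)
      + K * (X 0 0 + X 1 1)^2
      + M * ((X 2 0)^2 + (X 2 1)^2) := by
    simp [WCoss, fnorm2, devS, symM, skewM, planar, transv, Matrix.trace,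
      Matrix.mul_apply, dotProduct, Fin.sum_univ_succ, Matrix.one_apply, hc]
    ring
  have A1 : 0 ≤ μ * ((X 0 0 - X 1 1)^2/2 + (X 0 1 + X 1 0)^2/2) := by positivity
  have A2 : 0 ≤ μc * ((X 0 1 - X 1 0)^2/2) := by positivity
  have A3 : 0 ≤ K * (X 0 0 + X 1 1)^2 := by positivity
  have A4 : 0 ≤ M * ((X 2 0)^2 + (X 2 1)^2) := by positivity
  refine ⟨by rw [hW]; linarith, ?_, ?_⟩
  · intro h0
    rw [hW] at h0
    have e1 : X 0 0 - X 1 1 = 0 := by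
      have h : (X 0 0 - X 1 1)^2 ≤ 0 := by
        nlinarith [mul_nonneg hμ.le (sq_nonneg (X 0 1 + X 1 0))]
      exact pow_eq_zero_iff two_ne_zero |>.mp (le_antisymm h (sq_nonneg _))
    have e2 : X 0 1 + X 1 0 = 0 := by
      have h : (X 0 1 + X 1 0)^2 ≤ 0 := by
        nlinarith [mul_nonneg hμ.le (sq_nonneg (X 0 0 - X 1 1))]
      exact pow_eq_zero_iff two_ne_zero |>.mp (le_antisymm h (sq_nonneg _))
    have e3 : X 0 1 - X 1 0 = 0 := by
      have h : (X 0 1 - X 1 0)^2 ≤ 0 := by nlinarith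
      exact pow_eq_zero_iff two_ne_zero |>.mp (le_antisymm h (sq_nonneg _))
    have e4 : X 0 0 + X 1 1 = 0 := by
      have h : (X 0 0 + X 1 1)^2 ≤ 0 := by
        nlinarith [mul_nonneg hMpos.le (sq_nonneg (X 2 0)),
          mul_nonneg hMpos.le (sq_nonneg (X 2 1)),
          mul_nonneg hμ.le (sq_nonneg (X 0 0 - X 1 1)),
          mul_nonneg hμ.le (sq_nonneg (X 0 1 + X 1 0)),
          mul_nonneg hμc.le (sq_nonneg (X 0 1 - X 1 0))]
      exact pow_eq_zero_iff two_ne_zero |>.mp (le_antisymm h (sq_nonneg _))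
    have e5 : X 2 0 = 0 := by
      have h : (X 2 0)^2 ≤ 0 := by
        nlinarith [mul_nonneg hMpos.le (sq_nonneg (X 2 1)),
          mul_nonneg hKpos.le (sq_nonneg (X 0 0 + X 1 1)),
          mul_nonneg hμ.le (sq_nonneg (X 0 0 - X 1 1)),
          mul_nonneg hμ.le (sq_nonneg (X 0 1 + X 1 0)),
          mul_nonneg hμc.le (sq_nonneg (X 0 1 - X 1 0))]
      exact pow_eq_zero_iff two_ne_zero |>.mp (le_antisymm h (sq_nonneg _))
    have e6 : X 2 1 = 0 := by
      have h : (X 2 1)^2 ≤ 0 := by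
        nlinarith [mul_nonneg hMpos.le (sq_nonneg (X 2 0)),
          mul_nonneg hKpos.le (sq_nonneg (X 0 0 + X 1 1)),
          mul_nonneg hμ.le (sq_nonneg (X 0 0 - X 1 1)),
          mul_nonneg hμ.le (sq_nonneg (X 0 1 + X 1 0)),
          mul_nonneg hμc.le (sq_nonneg (X 0 1 - X 1 0))]
      exact pow_eq_zero_iff two_ne_zero |>.mp (le_antisymm h (sq_nonneg _))
    have h00 : X 0 0 = 0 := by linarith
    have h11 : X 1 1 = 0 := by linarith
    have h01 : X 0 1 = 0 := by linarith
    have h10 : X 1 0 = 0 := by linarith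
    ext i j
    fin_cases i <;> fin_cases j <;>
      first
        | exact h00 | exact h01 | exact h10 | exact h11 | exact e5 | exact e6
        | exact hc 0 | exact hc 1 | exact hc 2
  · intro h; subst h; rw [hW]; simp
end
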